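/- For every p ∈ Δ(Ω), v_∞(p) = inf{ g(p) : g ∈ G }, where G is the set of all functions g: Δ(Ω) → ℝ such that g ≥ v pointwise and g(σ(e)) ≥ Σ_{j∈[m]} λ_j g(p_j) for every experiment e = (λ_j, p_j)_{j∈[m]} ∈ F. -/

import Mathlib

open Filter Topology
open scoped Classical

noncomputable section

/-- Δ(Ω): beliefs, i.e. probability distributions on the finite state space Ω,
as a subspace of Ω → ℝ (its topology agrees with the total-variation one). -/
abbrev Belief (Ω : Type*) [Fintype Ω] :=
  {p : Ω → ℝ // (∀ ω, 0 ≤ p ω) ∧ ∑ ω, p ω = 1}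

variable {Ω : Type*} [Fintype Ω]

/-- An element of F₀: a finite-support experiment, i.e. a finitely supported probability
distribution over beliefs (keys are the distinct posteriors p_j, values the positive
weights λ_j). -/
structure SPExp (Ω : Type*) [Fintype Ω] where
  w : Belief Ω →₀ ℝ
  nonneg : ∀ p, 0 ≤ w p
  sum_one : ∑ p ∈ w.support, w p = 1

namespace SPExp

/-- τ(e): the support of an experiment. -/
def tau (e : SPExp Ω) : Finset (Belief Ω) := e.w.support

/-- Expectation of a real-valued function under an experiment. -/
def expect (e : SPExp Ω) (f : Belief Ω → ℝ) : ℝ := ∑ p ∈ e.w.support, e.w p * f p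

/-- σ(e): the barycenter (expectation) of an experiment. -/
def sigma (e : SPExp Ω) : Belief Ω :=
  ⟨fun ω => ∑ p ∈ e.w.support, e.w p * p.val ω,
   fun ω => Finset.sum_nonneg fun p _ => mul_nonneg (e.nonneg p) (p.2.1 ω),
   by
     calc ∑ ω, ∑ p ∈ e.w.support, e.w p * p.val ω
         = ∑ p ∈ e.w.support, ∑ ω, e.w p * p.val ω := Finset.sum_comm
       _ = ∑ p ∈ e.w.support, e.w p * ∑ ω, p.val ω := by
           refine Finset.sum_congr rfl fun p _ => ?_
           rw [Finset.mul_sum]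
       _ = ∑ p ∈ e.w.support, e.w p := by
           refine Finset.sum_congr rfl fun p _ => ?_
           rw [p.2.2, mul_one]
       _ = 1 := e.sum_one⟩

/-- The trivial experiment (1, p). -/
def triv (p : Belief Ω) : SPExp Ω where
  w := Finsupp.single p 1
  nonneg := fun q => by
    rw [Finsupp.single_apply]
    split <;> norm_num
  sum_one := by
    rw [Finsupp.support_single_ne_zero _ one_ne_zero]
    simp

end SPExp

/-- T: the set of trivial experiments. -/
def Trivials (Ω : Type*) [Fintype Ω] : Set (SPExp Ω) := Set.range SPExp.triv

/-- Weak convergence of experiments, viewed as Borel probability measures on Δ(Ω). -/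
def WeakTendsto (es : ℕ → SPExp Ω) (e : SPExp Ω) : Prop :=
  ∀ f : Belief Ω → ℝ, Continuous f →
    Tendsto (fun i => (es i).expect f) atTop (𝓝 (e.expect f))

/-- Convergence of beliefs in total variation. -/
def TVTendsto (ps : ℕ → Belief Ω) (p : Belief Ω) : Prop :=
  Tendsto (fun i => ∑ ω, |(ps i).val ω - p.val ω|) atTop (𝓝 0)

/-- Histories, most recent step first: entries are (experiment taken, realized posterior);
the starting belief is kept separately. -/
abbrev Hist (Ω : Type*) [Fintype Ω] := List (SPExp Ω × Belief Ω)

/-- last(ξ): the current belief after history ξ started at μ. -/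
def lastBelief (μ : Belief Ω) : Hist Ω → Belief Ω
  | [] => μ
  | (_, p) :: _ => p

/-- Pr[ξ]: the probability of a history. -/
def histProb : Hist Ω → ℝ
  | [] => 1
  | (e, p) :: ξ => e.w p * histProb ξ

/-- A sequential persuasion starting from μ with feasible experiments F, given by its
history-dependent choice of the next (feasible, Bayes-plausible) experiment.  An n-step
sequential persuasion is such a strategy used for n steps; an infinite sequential
persuasion is the strategy itself. -/
structure SeqP {Ω : Type*} [Fintype Ω] (F : Set (SPExp Ω)) (μ : Belief Ω) where
  next : Hist Ω → SPExp Ω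
  feasible : ∀ ξ, next ξ ∈ F
  bayes : ∀ ξ, (next ξ).sigma = lastBelief μ ξ

variable {F : Set (SPExp Ω)} {μ : Belief Ω}

/-- Expectation of g over the n-step histories of S extending ξ. -/
def histExp (S : SeqP F μ) (g : Hist Ω → ℝ) : ℕ → Hist Ω → ℝ
  | 0, ξ => g ξ
  | n + 1, ξ => (S.next ξ).expect fun p => histExp S g n ((S.next ξ, p) :: ξ)

/-- Ξ_n: the set of n-step histories of S. -/
def Hists (S : SeqP F μ) : ℕ → Set (Hist Ω)
  | 0 => {[]}
  | n + 1 => {ξ' | ∃ ξ ∈ Hists S n, ∃ p ∈ (S.next ξ).tau, ξ' = (S.next ξ, p) :: ξ}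

/-- ξ padded by l trivial steps. -/
def padHist (μ : Belief Ω) (ξ : Hist Ω) (l : ℕ) : Hist Ω :=
  List.replicate l (SPExp.triv (lastBelief μ ξ), lastBelief μ ξ) ++ ξ

/-- S terminates after ξ: all subsequent choices (along trivial continuations of ξ)
are the trivial experiment. -/
def TerminatesAfter (S : SeqP F μ) (ξ : Hist Ω) : Prop :=
  ∀ l : ℕ, S.next (padHist μ ξ l) = SPExp.triv (lastBelief μ ξ)

/-- 𝒱(S⁽ⁿ⁾) = E[v(b_n)], the expected utility of the n-step persuasion given by the
first n steps of S. -/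
def stepUtility (v : Belief Ω → ℝ) (S : SeqP F μ) (n : ℕ) : ℝ :=
  histExp S (fun ξ => v (lastBelief μ ξ)) n []

/-- Pr[S terminates after n steps]. -/
def termProb (S : SeqP F μ) (n : ℕ) : ℝ :=
  histExp S (fun ξ => if TerminatesAfter S ξ then 1 else 0) n []

/-- 𝒱(S) for an infinite sequential persuasion S. -/
def infUtility (v : Belief Ω → ℝ) (S : SeqP F μ) : ℝ :=
  ⨆ n : ℕ, histExp S (fun ξ => if TerminatesAfter S ξ then v (lastBelief μ ξ) else 0) n []

/-- Pr[b_n ∈ O] for the belief b_n induced by S after n steps. -/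
def massIn (S : SeqP F μ) (O : Set (Belief Ω)) (n : ℕ) : ℝ :=
  histExp S (fun ξ => if lastBelief μ ξ ∈ O then 1 else 0) n []

/-- v_n(p): the optimal value over n-step sequential persuasions starting from p. -/
def vN (F : Set (SPExp Ω)) (v : Belief Ω → ℝ) (n : ℕ) (p : Belief Ω) : ℝ :=
  ⨆ S : SeqP F p, stepUtility v S n

/-- v_∞(p): the optimal value over infinite sequential persuasions starting from p. -/
def vInf (F : Set (SPExp Ω)) (v : Belief Ω → ℝ) (p : Belief Ω) : ℝ :=
  ⨆ S : SeqP F p, infUtility v S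

/-- Assumption 1: a uniform support bound h, and weak closedness of F. -/
def Assumption1 (F : Set (SPExp Ω)) (h : ℕ) : Prop :=
  (∀ e ∈ F, e.tau.card ≤ h) ∧
  ∀ es : ℕ → SPExp Ω, (∀ i, es i ∈ F) → ∀ e : SPExp Ω, WeakTendsto es e → e ∈ F

/-- Shannon entropy of a belief. -/
def entropy (p : Belief Ω) : ℝ := -∑ ω, p.val ω * Real.log (p.val ω)

/-- Assumption 2: every nontrivial feasible experiment lowers expected entropy by δ. -/
def Assumption2 (F : Set (SPExp Ω)) (δ : ℝ) : Prop :=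
  ∀ e ∈ F \ Trivials Ω, e.expect entropy ≤ entropy e.sigma - δ

/-- S is (effectively) an n-step sequential persuasion: after n steps it only takes
trivial experiments. -/
def IsNStep (S : SeqP F μ) (n : ℕ) : Prop :=
  ∀ ξ : Hist Ω, n ≤ ξ.length → S.next ξ = SPExp.triv (lastBelief μ ξ)

/-- Assumption 3 at prior μ: a sequence of finite-step sequential persuasions whose
values tend to v_∞(μ) and which terminate at a uniform rate. -/
def Assumption3 (F : Set (SPExp Ω)) (v : Belief Ω → ℝ) (μ : Belief Ω) : Prop :=
  ∃ (nk : ℕ → ℕ) (Sk : ℕ → SeqP F μ),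
    (∀ k, IsNStep (Sk k) (nk k)) ∧
    Tendsto (fun k => stepUtility v (Sk k) (nk k)) atTop (𝓝 (vInf F v μ)) ∧
    ∀ ε : ℝ, 0 < ε → ∃ N : ℕ, ∀ k, N ≤ nk k → 1 - ε ≤ termProb (Sk k) N

/-- v̂: the concave closure of v (the value of unconstrained Bayesian persuasion). -/
def concaveClosure (v : Belief Ω → ℝ) (p : Belief Ω) : ℝ :=
  sSup {x : ℝ | ∃ e : SPExp Ω, e.sigma = p ∧ x = e.expect v}

/-- O is implementable for (μ, F). -/
def Implementable (F : Set (SPExp Ω)) (μ : Belief Ω) (O : Set (Belief Ω)) : Prop :=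
  ∀ ε : ℝ, 0 < ε → ∃ (n : ℕ) (S : SeqP F μ), 1 - ε < massIn S O n

/-- S is a Markov sequential persuasion compatible with (μ, D, Z, ρ). -/
def MarkovCompatible (S : SeqP F μ) (D Z : Set (Belief Ω)) (ρ : Belief Ω → SPExp Ω) : Prop :=
  ∀ ξ : Hist Ω,
    (lastBelief μ ξ ∈ D → S.next ξ = ρ (lastBelief μ ξ)) ∧
    (lastBelief μ ξ ∈ Z → S.next ξ = SPExp.triv (lastBelief μ ξ))

/-- The j-th child of vertex m at depth n of the infinite h-ary tree. -/
def treeChild {h n : ℕ} (m : Fin (h ^ n)) (j : Fin h) : Fin (h ^ (n + 1)) :=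
  ⟨m.val * h + j.val, by
    have h1 : m.val + 1 ≤ h ^ n := m.isLt
    have h2 : j.val < h := j.isLt
    calc m.val * h + j.val < m.val * h + h := by omega
      _ = (m.val + 1) * h := by ring
      _ ≤ h ^ n * h := Nat.mul_le_mul h1 le_rfl
      _ = h ^ (n + 1) := (pow_succ h n).symm⟩

/-- An h-branching sequential persuasion starting from μ. -/
structure HBranch (Ω : Type*) [Fintype Ω] (F : Set (SPExp Ω)) (h : ℕ) (μ : Belief Ω) where
  π : ∀ n : ℕ, Fin (h ^ n) → ℝ
  β : ∀ n : ℕ, Fin (h ^ n) → Belief Ω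
  η : ∀ n : ℕ, Fin (h ^ n) → SPExp Ω
  π_nonneg : ∀ n m, 0 ≤ π n m
  π_sum : ∀ n : ℕ, ∑ m, π n m = 1
  η_mem : ∀ n m, η n m ∈ F
  β_root : ∀ m, β 0 m = μ
  compat_sigma : ∀ n m, (η n m).sigma = β n m
  compat_tau : ∀ (n : ℕ) (m : Fin (h ^ n)), ∀ p ∈ (η n m).tau,
    ∃ j : Fin h, β (n + 1) (treeChild m j) = p
  consistent : ∀ (n : ℕ) (m : Fin (h ^ n)) (p : Belief Ω),
    (∑ j : Fin h, if β (n + 1) (treeChild m j) = p then π (n + 1) (treeChild m j) else 0)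
      = π n m * (η n m).w p

/-- c' (at depth n + l) is a descendant of c (at depth n) in the h-ary tree. -/
def Descendant {h : ℕ} : {n : ℕ} → (l : ℕ) → Fin (h ^ n) → Fin (h ^ (n + l)) → Prop
  | _, 0, c, c' => c = c'
  | _, l + 1, c, c' => ∃ c'' j, Descendant l c c'' ∧ c' = treeChild c'' j

namespace HBranch

variable {h : ℕ}

/-- B terminates after vertex m at depth n. -/
def TermAfter (B : HBranch Ω F h μ) (n : ℕ) (m : Fin (h ^ n)) : Prop :=
  B.η n m ∈ Trivials Ω ∧
  ∀ (l : ℕ) (c' : Fin (h ^ (n + l))), Descendant l m c' → 0 < B.π (n + l) c' →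
    B.η (n + l) c' ∈ Trivials Ω

/-- Pr[B terminates after n steps]. -/
def termProb (B : HBranch Ω F h μ) (n : ℕ) : ℝ :=
  ∑ m : Fin (h ^ n), if B.TermAfter n m then B.π n m else 0

end HBranch

/-- B represents the infinite sequential persuasion S (via maps r_n : C_n → Ξ_n). -/
def Represents (S : SeqP F μ) {h : ℕ} (B : HBranch Ω F h μ) : Prop :=
  ∃ r : ∀ n : ℕ, Fin (h ^ n) → Hist Ω,
    ∀ n : ℕ,
      (∀ c, r n c ∈ Hists S n) ∧
      (∀ ξ ∈ Hists S n, histProb ξ = ∑ c, if r n c = ξ then B.π n c else 0) ∧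
      (∀ c, lastBelief μ (r n c) = B.β n c ∧ S.next (r n c) = B.η n c) ∧
      (∀ l : ℕ, ∀ ξ ∈ Hists S n, ∀ ξ' ∈ Hists S (n + l),
        (ξ <:+ ξ' ↔
          ∀ c' : Fin (h ^ (n + l)), r (n + l) c' = ξ' →
            ∃ c : Fin (h ^ n), r n c = ξ ∧ Descendant l c c'))

/-- The number of nontrivial experiments taken along a history. -/
def nontrivCount (ξ : Hist Ω) : ℕ :=
  ξ.countP fun s => decide (s.1 ∉ Trivials Ω)

end

noncomputable section Aux

namespace ThmAux

open SPExp

variable {Ω : Type*} [Fintype Ω]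

lemma expect_mono (e : SPExp Ω) {f g : Belief Ω → ℝ} (h : ∀ p, f p ≤ g p) :
    e.expect f ≤ e.expect g :=
  Finset.sum_le_sum fun p _ => mul_le_mul_of_nonneg_left (h p) (e.nonneg p)

lemma expect_const (e : SPExp Ω) (c : ℝ) : e.expect (fun _ => c) = c := by
  unfold SPExp.expect
  rw [← Finset.sum_mul, e.sum_one, one_mul]

lemma expect_le (e : SPExp Ω) {f : Belief Ω → ℝ} {b : ℝ} (h : ∀ p, f p ≤ b) :
    e.expect f ≤ b :=
  (expect_mono e h).trans_eq (expect_const e b)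

lemma le_expect (e : SPExp Ω) {f : Belief Ω → ℝ} {a : ℝ} (h : ∀ p, a ≤ f p) :
    a ≤ e.expect f :=
  (expect_const e a).symm.trans_le (expect_mono e h)

lemma expect_add_const (e : SPExp Ω) (f : Belief Ω → ℝ) (c : ℝ) :
    e.expect (fun p => f p + c) = e.expect f + c := by
  unfold SPExp.expect
  simp only [mul_add, Finset.sum_add_distrib, ← Finset.sum_mul, e.sum_one, one_mul]

lemma expect_triv (q : Belief Ω) (f : Belief Ω → ℝ) : (SPExp.triv q).expect f = f q := by
  unfold SPExp.expect
  show ∑ p ∈ (Finsupp.single q (1:ℝ)).support, (Finsupp.single q (1:ℝ)) p * f p = f q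
  rw [Finsupp.support_single_ne_zero _ one_ne_zero]
  simp

lemma sigma_triv (q : Belief Ω) : (SPExp.triv q).sigma = q := by
  apply Subtype.ext
  funext ω
  show ∑ p ∈ (Finsupp.single q (1:ℝ)).support, (Finsupp.single q (1:ℝ)) p * p.val ω = q.val ω
  rw [Finsupp.support_single_ne_zero _ one_ne_zero]
  simp

lemma lastBelief_cons (μ : Belief Ω) (x : SPExp Ω × Belief Ω) (ξ : Hist Ω) :
    lastBelief μ (x :: ξ) = x.2 := by
  cases x; rfl

lemma lastBelief_concat (μ p : Belief Ω) (e : SPExp Ω) (ξ : Hist Ω) :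
    lastBelief μ (ξ ++ [(e, p)]) = lastBelief p ξ := by
  cases ξ with
  | nil => rfl
  | cons x t => rw [List.cons_append, lastBelief_cons, lastBelief_cons]

lemma padHist_zero (μ : Belief Ω) (ξ : Hist Ω) : padHist μ ξ 0 = ξ := rfl

lemma lastBelief_padHist (μ : Belief Ω) (ξ : Hist Ω) (l : ℕ) :
    lastBelief μ (padHist μ ξ l) = lastBelief μ ξ := by
  cases l with
  | zero => rfl
  | succ l =>
    rw [padHist, List.replicate_succ, List.cons_append, lastBelief_cons]

lemma padHist_cons (μ : Belief Ω) (ξ : Hist Ω) (l : ℕ) :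
    padHist μ ((SPExp.triv (lastBelief μ ξ), lastBelief μ ξ) :: ξ) l = padHist μ ξ (l + 1) := by
  unfold padHist
  rw [lastBelief_cons]
  rw [List.replicate_succ' ]
  simp [List.append_assoc]

lemma padHist_concat (μ p : Belief Ω) (e : SPExp Ω) (ξ : Hist Ω) (l : ℕ) :
    padHist μ (ξ ++ [(e, p)]) l = padHist p ξ l ++ [(e, p)] := by
  unfold padHist
  rw [lastBelief_concat, List.append_assoc]

variable {F : Set (SPExp Ω)} {μ : Belief Ω}

lemma terminatesAfter_cons (S : SeqP F μ) (ξ : Hist Ω) (h : TerminatesAfter S ξ) :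
    TerminatesAfter S ((SPExp.triv (lastBelief μ ξ), lastBelief μ ξ) :: ξ) := by
  intro l
  rw [padHist_cons, lastBelief_cons]
  exact h (l + 1)

lemma histExp_succ (S : SeqP F μ) (g : Hist Ω → ℝ) (n : ℕ) (ξ : Hist Ω) :
    histExp S g (n + 1) ξ = (S.next ξ).expect fun p => histExp S g n ((S.next ξ, p) :: ξ) :=
  rfl

lemma histExp_le (S : SeqP F μ) {g : Hist Ω → ℝ} {b : ℝ} (hg : ∀ ξ, g ξ ≤ b) :
    ∀ (n : ℕ) (ξ : Hist Ω), histExp S g n ξ ≤ b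
  | 0, ξ => hg ξ
  | n + 1, ξ => by
    rw [histExp_succ]
    exact expect_le _ fun p => histExp_le S hg n _

lemma le_histExp (S : SeqP F μ) {g : Hist Ω → ℝ} {a : ℝ} (hg : ∀ ξ, a ≤ g ξ) :
    ∀ (n : ℕ) (ξ : Hist Ω), a ≤ histExp S g n ξ
  | 0, ξ => hg ξ
  | n + 1, ξ => by
    rw [histExp_succ]
    exact le_expect _ fun p => le_histExp S hg n _

lemma histExp_mono (S : SeqP F μ) {g g' : Hist Ω → ℝ} (h : ∀ ξ, g ξ ≤ g' ξ) :
    ∀ (n : ℕ) (ξ : Hist Ω), histExp S g n ξ ≤ histExp S g' n ξ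
  | 0, ξ => h ξ
  | n + 1, ξ => by
    rw [histExp_succ, histExp_succ]
    exact expect_mono _ fun p => histExp_mono S h n _

lemma histExp_superharm (S : SeqP F μ) {g : Belief Ω → ℝ}
    (hg : ∀ e ∈ F, e.expect g ≤ g e.sigma) :
    ∀ (n : ℕ) (ξ : Hist Ω), histExp S (fun ζ => g (lastBelief μ ζ)) n ξ ≤ g (lastBelief μ ξ)
  | 0, ξ => le_rfl
  | n + 1, ξ => by
    rw [histExp_succ]
    calc ((S.next ξ).expect fun p =>
          histExp S (fun ζ => g (lastBelief μ ζ)) n ((S.next ξ, p) :: ξ))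
        ≤ (S.next ξ).expect g := by
          refine expect_mono _ fun p => ?_
          have := histExp_superharm S hg n ((S.next ξ, p) :: ξ)
          rwa [lastBelief_cons] at this
      _ ≤ g (S.next ξ).sigma := hg _ (S.feasible ξ)
      _ = g (lastBelief μ ξ) := by rw [S.bayes ξ]

/-- The terminal-value function whose histExp gives infUtility. -/
def fT (v : Belief Ω → ℝ) (S : SeqP F μ) (ξ : Hist Ω) : ℝ :=
  if TerminatesAfter S ξ then v (lastBelief μ ξ) else 0

lemma infUtility_eq (v : Belief Ω → ℝ) (S : SeqP F μ) :
    infUtility v S = ⨆ n : ℕ, histExp S (fT v S) n [] := rfl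

lemma fT_nonneg {v : Belief Ω → ℝ} (hv : ∀ q, 0 ≤ v q) (S : SeqP F μ) (ξ : Hist Ω) :
    0 ≤ fT v S ξ := by
  unfold fT; split
  · exact hv _
  · exact le_rfl

lemma fT_le {v : Belief Ω → ℝ} {Vhi : ℝ} (hv : ∀ q, v q ≤ Vhi) (h0 : 0 ≤ Vhi)
    (S : SeqP F μ) (ξ : Hist Ω) : fT v S ξ ≤ Vhi := by
  unfold fT; split
  · exact hv _
  · exact h0

lemma histExp_fT_mono {v : Belief Ω → ℝ} (hv : ∀ q, 0 ≤ v q) (S : SeqP F μ) :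
    ∀ (n : ℕ) (ξ : Hist Ω), histExp S (fT v S) n ξ ≤ histExp S (fT v S) (n + 1) ξ
  | 0, ξ => by
    rw [histExp_succ]
    by_cases h : TerminatesAfter S ξ
    · have hnext : S.next ξ = SPExp.triv (lastBelief μ ξ) := h 0
      rw [hnext, expect_triv]
      show fT v S ξ ≤ fT v S ((SPExp.triv (lastBelief μ ξ), lastBelief μ ξ) :: ξ)
      unfold fT
      rw [if_pos h, if_pos (terminatesAfter_cons S ξ h), lastBelief_cons]
    · show fT v S ξ ≤ _
      rw [fT, if_neg h]
      exact le_expect _ fun p => fT_nonneg hv S _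
  | n + 1, ξ => by
    rw [histExp_succ, histExp_succ (n := n + 1)]
    exact expect_mono _ fun p => histExp_fT_mono hv S n _

/-- The trivial (always-terminate) strategy. -/
def trivSeqP (F : Set (SPExp Ω)) (hTF : Trivials Ω ⊆ F) (μ : Belief Ω) : SeqP F μ where
  next ξ := SPExp.triv (lastBelief μ ξ)
  feasible ξ := hTF ⟨_, rfl⟩
  bayes ξ := sigma_triv _

lemma trivSeqP_terminates (hTF : Trivials Ω ⊆ F) (ξ : Hist Ω) :
    TerminatesAfter (trivSeqP F hTF μ) ξ := by
  intro l
  show SPExp.triv (lastBelief μ (padHist μ ξ l)) = _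
  rw [lastBelief_padHist]

end ThmAux

end Aux

noncomputable section Aux2

namespace ThmAux

open SPExp

variable {Ω : Type*} [Fintype Ω] {F : Set (SPExp Ω)} {μ : Belief Ω}

lemma bddAbove_histExp {v : Belief Ω → ℝ} {Vhi : ℝ} (hv : ∀ q, v q ≤ Vhi) (h0 : 0 ≤ Vhi)
    (S : SeqP F μ) : BddAbove (Set.range fun n => histExp S (fT v S) n []) := by
  refine ⟨Vhi, ?_⟩
  rintro x ⟨n, rfl⟩
  exact histExp_le S (fT_le hv h0 S) n []

lemma infUtility_le {v : Belief Ω → ℝ} {Vhi : ℝ} (hv : ∀ q, v q ≤ Vhi) (h0 : 0 ≤ Vhi)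
    (S : SeqP F μ) : infUtility v S ≤ Vhi := by
  rw [infUtility_eq]
  exact ciSup_le fun n => histExp_le S (fT_le hv h0 S) n []

lemma bddAbove_infUtility {v : Belief Ω → ℝ} {Vhi : ℝ} (hv : ∀ q, v q ≤ Vhi) (h0 : 0 ≤ Vhi) :
    BddAbove (Set.range fun S : SeqP F μ => infUtility v S) := by
  refine ⟨Vhi, ?_⟩
  rintro x ⟨S, rfl⟩
  exact infUtility_le hv h0 S

lemma v_le_vInf (hTF : Trivials Ω ⊆ F) {v : Belief Ω → ℝ} {Vhi : ℝ}
    (hv : ∀ q, v q ≤ Vhi) (h0 : 0 ≤ Vhi) (q : Belief Ω) : v q ≤ vInf F v q := by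
  have h1 : v q ≤ infUtility v (trivSeqP F hTF q) := by
    rw [infUtility_eq]
    have := le_ciSup (bddAbove_histExp hv h0 (trivSeqP F hTF q)) 0
    refine le_trans ?_ this
    show v q ≤ fT v _ []
    rw [fT, if_pos (trivSeqP_terminates hTF [])]
    exact le_rfl
  exact h1.trans (le_ciSup (bddAbove_infUtility hv h0) _)

/-- Next-step map of the composition of e with the family Sf. -/
def compNext (e : SPExp Ω) (Sf : ∀ p : Belief Ω, SeqP F p) (ξ : Hist Ω) : SPExp Ω :=
  if h : ξ = [] then e
  else if (ξ.getLast h).1 = e then (Sf (ξ.getLast h).2).next ξ.dropLast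
  else SPExp.triv (lastBelief e.sigma ξ)

lemma lastBelief_getLast_dropLast (μ : Belief Ω) (ξ : Hist Ω) (h : ξ ≠ []) :
    lastBelief (ξ.getLast h).2 ξ.dropLast = lastBelief μ ξ := by
  cases ξ with
  | nil => exact absurd rfl h
  | cons x t =>
    cases t with
    | nil => cases x; rfl
    | cons y u =>
      rw [show (x :: y :: u).dropLast = x :: (y :: u).dropLast from rfl,
        lastBelief_cons, lastBelief_cons]

/-- The composed strategy: play e first, then follow Sf p from posterior p. -/
def compSeqP (hTF : Trivials Ω ⊆ F) (e : SPExp Ω) (he : e ∈ F)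
    (Sf : ∀ p : Belief Ω, SeqP F p) : SeqP F e.sigma where
  next := compNext e Sf
  feasible ξ := by
    unfold compNext
    split
    · exact he
    · split
      · exact (Sf _).feasible _
      · exact hTF ⟨_, rfl⟩
  bayes ξ := by
    unfold compNext
    split
    · next h => rw [h]; rfl
    · next h =>
      split
      · rw [(Sf _).bayes]
        exact lastBelief_getLast_dropLast _ ξ h
      · exact sigma_triv _

variable (hTF : Trivials Ω ⊆ F) (e : SPExp Ω) (he : e ∈ F) (Sf : ∀ p : Belief Ω, SeqP F p)

lemma compNext_nil : compNext e Sf [] = e := dif_pos rfl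

lemma compNext_concat (ξ : Hist Ω) (p : Belief Ω) :
    compNext e Sf (ξ ++ [(e, p)]) = (Sf p).next ξ := by
  have hne : ξ ++ [(e, p)] ≠ [] := by simp
  unfold compNext
  rw [dif_neg hne]
  have h1 : (ξ ++ [(e, p)]).getLast hne = (e, p) := List.getLast_concat
  rw [h1, if_pos rfl, List.dropLast_concat]

lemma comp_terminates_iff (ξ : Hist Ω) (p : Belief Ω) :
    TerminatesAfter (compSeqP hTF e he Sf) (ξ ++ [(e, p)]) ↔ TerminatesAfter (Sf p) ξ := by
  unfold TerminatesAfter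
  apply forall_congr'
  intro l
  show compNext e Sf (padHist e.sigma (ξ ++ [(e, p)]) l) = _ ↔ _
  rw [padHist_concat, compNext_concat, lastBelief_concat]

lemma comp_histExp (f : Hist Ω → ℝ) (p : Belief Ω) :
    ∀ (n : ℕ) (ξ : Hist Ω),
      histExp (compSeqP hTF e he Sf) f n (ξ ++ [(e, p)]) =
        histExp (Sf p) (fun ζ => f (ζ ++ [(e, p)])) n ξ
  | 0, ξ => rfl
  | n + 1, ξ => by
    rw [histExp_succ, histExp_succ]
    have hn : (compSeqP hTF e he Sf).next (ξ ++ [(e, p)]) = (Sf p).next ξ :=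
      compNext_concat e Sf ξ p
    rw [hn]
    unfold SPExp.expect
    refine Finset.sum_congr rfl fun q _ => ?_
    congr 1
    exact comp_histExp f p n (((Sf p).next ξ, q) :: ξ)

lemma comp_fT (v : Belief Ω → ℝ) (p : Belief Ω) (ζ : Hist Ω) :
    fT v (compSeqP hTF e he Sf) (ζ ++ [(e, p)]) = fT v (Sf p) ζ := by
  unfold fT
  rw [lastBelief_concat]
  exact if_congr (comp_terminates_iff hTF e he Sf ζ p) rfl rfl

lemma comp_histExp_step (v : Belief Ω → ℝ) (n : ℕ) :
    histExp (compSeqP hTF e he Sf) (fT v (compSeqP hTF e he Sf)) (n + 1) [] =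
      e.expect fun p => histExp (Sf p) (fT v (Sf p)) n [] := by
  rw [histExp_succ]
  have h0 : (compSeqP hTF e he Sf).next [] = e := compNext_nil e Sf
  rw [h0]
  unfold SPExp.expect
  refine Finset.sum_congr rfl fun p _ => ?_
  congr 1
  refine (comp_histExp hTF e he Sf (fT v (compSeqP hTF e he Sf)) p n []).trans ?_
  congr 1
  funext ζ
  exact comp_fT hTF e he Sf v p ζ

end ThmAux

end Aux2

noncomputable section Aux3

open Filter Topology SPExp

namespace ThmAux

variable {Ω : Type*} [Fintype Ω] {F : Set (SPExp Ω)} {μ : Belief Ω}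

lemma ciSup_expect {Vhi : ℝ} (e : SPExp Ω) (a : Belief Ω → ℕ → ℝ)
    (hmono : ∀ p, Monotone (a p)) (hbdd : ∀ p n, a p n ≤ Vhi) :
    (⨆ n : ℕ, e.expect fun p => a p n) = e.expect fun p => ⨆ n : ℕ, a p n := by
  have hb : ∀ p, BddAbove (Set.range (a p)) := fun p => ⟨Vhi, by rintro x ⟨n, rfl⟩; exact hbdd p n⟩
  have hlim : ∀ p, Tendsto (a p) atTop (𝓝 (⨆ n, a p n)) := fun p =>
    tendsto_atTop_ciSup (hmono p) (hb p)
  have hlim2 : Tendsto (fun n => e.expect fun p => a p n) atTop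
      (𝓝 (e.expect fun p => ⨆ n, a p n)) := by
    unfold SPExp.expect
    exact tendsto_finset_sum _ fun p _ => ((hlim p).const_mul _)
  have hmono2 : Monotone fun n => e.expect fun p => a p n := fun m n h =>
    expect_mono _ fun p => hmono p h
  exact (isLUB_of_tendsto_atTop hmono2 hlim2).ciSup_eq

lemma vInf_superharm (hTF : Trivials Ω ⊆ F) {v : Belief Ω → ℝ} {Vhi : ℝ}
    (hv0 : ∀ q, 0 ≤ v q) (hv : ∀ q, v q ≤ Vhi) (h0 : 0 ≤ Vhi)
    (e : SPExp Ω) (he : e ∈ F) :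
    e.expect (vInf F v) ≤ vInf F v e.sigma := by
  haveI : ∀ q : Belief Ω, Nonempty (SeqP F q) := fun q => ⟨trivSeqP F hTF q⟩
  by_contra hcon
  push_neg at hcon
  set ε : ℝ := (e.expect (vInf F v) - vInf F v e.sigma) / 2 with hεdef
  have hε : 0 < ε := by simp only [hεdef]; linarith
  have hch : ∀ p : Belief Ω, ∃ S : SeqP F p, vInf F v p - ε < infUtility v S := by
    intro p
    have h1 : vInf F v p - ε < vInf F v p := by linarith
    exact exists_lt_of_lt_ciSup h1
  choose Sf hSf using hch
  set S : SeqP F e.sigma := compSeqP hTF e he Sf with hSdef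
  have key : infUtility v S = e.expect fun p => infUtility v (Sf p) := by
    rw [infUtility_eq]
    have hshift : (⨆ n : ℕ, histExp S (fT v S) n []) =
        ⨆ n : ℕ, histExp S (fT v S) (n + 1) [] := by
      apply le_antisymm
      · refine ciSup_le fun n => ?_
        refine (histExp_fT_mono hv0 S n []).trans ?_
        have hb : BddAbove (Set.range fun n => histExp S (fT v S) (n + 1) []) := by
          refine ⟨Vhi, ?_⟩; rintro x ⟨n, rfl⟩; exact histExp_le S (fT_le hv h0 S) _ []
        exact le_ciSup hb n
      · exact ciSup_le fun n => le_ciSup (bddAbove_histExp hv h0 S) (n + 1)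
    rw [hshift]
    have hstep : ∀ n : ℕ, histExp S (fT v S) (n + 1) [] =
        e.expect fun p => histExp (Sf p) (fT v (Sf p)) n [] := fun n =>
      comp_histExp_step hTF e he Sf v n
    calc (⨆ n : ℕ, histExp S (fT v S) (n + 1) [])
        = ⨆ n : ℕ, e.expect fun p => histExp (Sf p) (fT v (Sf p)) n [] := by
          exact iSup_congr hstep
      _ = e.expect fun p => ⨆ n : ℕ, histExp (Sf p) (fT v (Sf p)) n [] := by
          refine ciSup_expect e _ (fun p => monotone_nat_of_le_succ fun n =>
            histExp_fT_mono hv0 (Sf p) n []) (fun p n => histExp_le (Sf p) (fT_le hv h0 (Sf p)) n [])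
      _ = e.expect fun p => infUtility v (Sf p) := rfl
  have h2 : infUtility v S ≤ vInf F v e.sigma := le_ciSup (bddAbove_infUtility hv h0) S
  have h3 : e.expect (vInf F v) ≤ infUtility v S + ε := by
    rw [key]
    have := expect_mono e (f := vInf F v) (g := fun p => infUtility v (Sf p) + ε)
      (fun p => by show vInf F v p ≤ infUtility v (Sf p) + ε; linarith [hSf p])
    rwa [expect_add_const] at this
  simp only [hεdef] at h3 h2
  linarith

end ThmAux

end Aux3

/-- Theorem 1 (thm-limit-characterize): v_∞(p) = inf{g(p) ; g ∈ G}. -/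
theorem thm_limit_characterize {Ω : Type*} [Fintype Ω] [Nonempty Ω]
    (F : Set (SPExp Ω)) (hTF : Trivials Ω ⊆ F)
    (v : Belief Ω → ℝ) (Vlo Vhi : ℝ) (hVlo : 0 < Vlo) (hVV : Vlo ≤ Vhi)
    (hvlo : ∀ p, Vlo ≤ v p) (hvhi : ∀ p, v p ≤ Vhi)
    (husc : UpperSemicontinuous v) :
    ∀ p : Belief Ω,
      vInf F v p =
        sInf {x : ℝ | ∃ g : Belief Ω → ℝ,
          (∀ q, v q ≤ g q) ∧
          (∀ e ∈ F, SPExp.expect e g ≤ g (SPExp.sigma e)) ∧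
          x = g p} := by
  intro p
  haveI : ∀ q : Belief Ω, Nonempty (SeqP F q) := fun q => ⟨ThmAux.trivSeqP F hTF q⟩
  have hv0 : ∀ q, 0 ≤ v q := fun q => hVlo.le.trans (hvlo q)
  have hVhi0 : 0 ≤ Vhi := hVlo.le.trans hVV
  apply le_antisymm
  · refine le_csInf ⟨Vhi, fun _ => Vhi, hvhi, fun e _ => (ThmAux.expect_const e Vhi).le, rfl⟩ ?_
    rintro x ⟨g, hgv, hgsup, rfl⟩
    rw [vInf]
    refine ciSup_le fun S => ?_
    rw [ThmAux.infUtility_eq v S]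
    refine ciSup_le fun n => ?_
    have hfg : ∀ ξ, ThmAux.fT v S ξ ≤ g (lastBelief p ξ) := by
      intro ξ
      unfold ThmAux.fT
      split
      · exact hgv _
      · exact hVlo.le.trans ((hvlo _).trans (hgv _))
    calc histExp S (ThmAux.fT v S) n [] ≤ histExp S (fun ξ => g (lastBelief p ξ)) n [] :=
          ThmAux.histExp_mono S hfg n []
      _ ≤ g (lastBelief p []) := ThmAux.histExp_superharm S hgsup n []
      _ = g p := rfl
  · refine csInf_le ⟨Vlo, ?_⟩ ⟨vInf F v, fun q => ThmAux.v_le_vInf hTF hvhi hVhi0 q,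
      fun e he => ThmAux.vInf_superharm hTF hv0 hvhi hVhi0 e he, rfl⟩
    rintro x ⟨g, hg, _, rfl⟩
    exact (hvlo p).trans (hg p)
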